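/- Let G be a finite group and let H and K be subgroups of G such that G = HK and [H, K] = 1 (every element of H commutes with every element of K). If x ∈ H and H is nilpotent, then nil_G(x) = G. -/

import Mathlib

/-- The nilpotentizer of `x` in `G`: the set of `y` such that `⟨x, y⟩` is nilpotent. -/
def nilpotentizer {G : Type*} [Group G] (x : G) : Set G :=
  {y | Group.IsNilpotent (Subgroup.closure ({x, y} : Set G))}

lemma nil_of_le {G : Type*} [Group G] {S T : Subgroup G} (h : S ≤ T)
    (hT : Group.IsNilpotent T) : Group.IsNilpotent S :=
  nilpotent_of_surjective (Subgroup.subgroupOfEquivOfLe h).toMonoidHom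
    (Subgroup.subgroupOfEquivOfLe h).surjective

theorem stmt_6 {G : Type*} [Group G] [Finite G] (H K : Subgroup G)
    (hHK : ∀ g : G, ∃ h ∈ H, ∃ k ∈ K, g = h * k)
    (hcomm : ∀ h ∈ H, ∀ k ∈ K, h * k = k * h)
    (x : G) (hx : x ∈ H) (hH : Group.IsNilpotent H) :
    nilpotentizer x = (Set.univ : Set G) := by
  ext y
  simp only [Set.mem_univ, iff_true]
  obtain ⟨h, hh, k, hk, rfl⟩ := hHK y
  -- A = ⟨x, h⟩ ≤ H, nilpotent
  set A : Subgroup G := Subgroup.closure {x, h} with hA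
  have hAle : A ≤ H := by
    rw [hA, Subgroup.closure_le]
    rintro z (rfl | rfl) <;> assumption
  have hAnil : Group.IsNilpotent A := nil_of_le hAle hH
  -- B = ⟨k⟩ cyclic, nilpotent
  set B : Subgroup G := Subgroup.zpowers k with hB
  have hBnil : Group.IsNilpotent B :=
    @CommGroup.isNilpotent _ (by open IsMulCommutative in exact (inferInstance : CommGroup B))
  -- elements of A commute with elements of B
  have hAB : ∀ (a : A) (b : B), Commute (A.subtype a) (B.subtype b) := by
    rintro ⟨a, ha⟩ ⟨b, hb⟩
    obtain ⟨n, rfl⟩ := hb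
    show Commute a (k ^ n)
    exact Commute.zpow_right (hcomm a (hAle ha) k hk) n
  let φ : A × B →* G := MonoidHom.noncommCoprod A.subtype B.subtype hAB
  haveI : Group.IsNilpotent (A × B) := inferInstance
  have hRnil : Group.IsNilpotent φ.range :=
    nilpotent_of_surjective φ.rangeRestrict φ.rangeRestrict_surjective
  have hle : Subgroup.closure ({x, h * k} : Set G) ≤ φ.range := by
    rw [Subgroup.closure_le]
    rintro z (rfl | rfl)
    · exact ⟨(⟨z, Subgroup.subset_closure (Or.inl rfl)⟩, 1), by simp [φ]⟩
    · exact ⟨(⟨h, Subgroup.subset_closure (Or.inr rfl)⟩, ⟨k, Subgroup.mem_zpowers k⟩),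
        by simp [φ]⟩
  exact nil_of_le hle hRnil
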